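/- arXiv:2402.03415 — 3 statements merged into one kernel-verified Lean document; each statement's English description precedes it below -/
import Mathlib

section
/- Let H be a real Hilbert space with inner product ⟨·,·⟩, and let T₁, T₂ be two bounded invertible linear operators on H such that: (i) T₁ is self-adjoint, and (ii) ⟨T₂f, f⟩ ≥ ⟨T₁f, f⟩ ≥ 0 for all f ∈ H. Then for all f ∈ H, ⟨T₁⁻¹f, f⟩ ≥ ⟨T₂⁻¹f, f⟩. -/
/-- comparison of inverses of positive operators on a real Hilbert space
(Lemma 2.24 of Woess). -/
theorem stmt_11 {H : Type*} [NormedAddCommGroup H] [InnerProductSpace ℝ H] [CompleteSpace H]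
    (T₁ T₂ : H ≃L[ℝ] H)
    (h_sa : ∀ f g : H, (inner ℝ (T₁ f) g : ℝ) = inner ℝ f (T₁ g))
    (h_pos : ∀ f : H, (0:ℝ) ≤ inner ℝ (T₁ f) f)
    (h_cmp : ∀ f : H, (inner ℝ (T₁ f) f : ℝ) ≤ inner ℝ (T₂ f) f) :
    ∀ f : H, (inner ℝ (T₂.symm f) f : ℝ) ≤ inner ℝ (T₁.symm f) f := by
  intro f
  set g := T₂.symm f with hg
  set h := T₁.symm f with hh
  have hf1 : T₁ h = f := T₁.apply_symm_apply f
  have hf2 : T₂ g = f := T₂.apply_symm_apply f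
  have key : (0:ℝ) ≤ inner ℝ (T₁ (g - h)) (g - h) := h_pos _
  have expand : (inner ℝ (T₁ (g - h)) (g - h) : ℝ)
      = inner ℝ (T₁ g) g - 2 * inner ℝ g f + inner ℝ h f := by
    have h1 : (inner ℝ (T₁ g) h : ℝ) = inner ℝ g f := by rw [h_sa, hf1]
    have h2 : (inner ℝ (T₁ h) g : ℝ) = inner ℝ g f := by rw [hf1, real_inner_comm]
    have h3 : (inner ℝ (T₁ h) h : ℝ) = inner ℝ h f := by rw [hf1, real_inner_comm]
    simp only [map_sub, inner_sub_left, inner_sub_right, h1, h2, h3]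
    ring
  have cmp := h_cmp g
  have hgf : (inner ℝ g f : ℝ) = inner ℝ (T₂ g) g := by rw [hf2, real_inner_comm]
  linarith [key, cmp, expand]
end

section
/- Let S be a countable set, ν₀: S → (0,∞) a positive measure, 𝒫 a Markov transition kernel on S for which ν₀ is invariant (Σ_x ν₀(x)𝒫(x,y) = ν₀(y) for all y), and K a Markov transition kernel on S reversible with respect to ν₀ (ν₀(x)K(x,y) = ν₀(y)K(y,x) for all x,y). Suppose ε ∈ (0,1) and 𝒫(x,y) ≥ ε·K(x,y) for all x,y ∈ S. Then for every O ∈ S and every z ∈ (0,1), Σ_{t≥0} z^t·𝒫^t(O,O) ≤ ε⁻¹·Σ_{t≥0} z^t·K^t(O,O); consequently, letting z → 1, the Green functions satisfy G_𝒫(O,O) ≤ ε⁻¹·G_K(O,O) in [0,∞]. -/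
open scoped Classical ENNReal

noncomputable section

/-- `t`-step kernel of a (sub)Markov kernel on a countable space. -/
def kstep {S : Type*} (Q : S → S → ℝ) : ℕ → S → S → ℝ
  | 0 => fun x y => if x = y then 1 else 0
  | (t + 1) => fun x y => ∑' z, kstep Q t x z * Q z y

section aux

variable {S : Type*} [Countable S]

/-- Swap a double sum of nonnegative reals. -/
lemma swap_hasSum {α β : Type*} {F : α → β → ℝ} (hnn : ∀ a b, 0 ≤ F a b)
    {g : α → ℝ} {s : ℝ} (hfib : ∀ a, HasSum (F a) (g a)) (hg : HasSum g s) :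
    HasSum (fun b => ∑' a, F a b) s := by
  have hf : Summable (fun p : α × β => F p.1 p.2) := by
    rw [summable_prod_of_nonneg (fun p => hnn p.1 p.2)]
    refine ⟨fun a => (hfib a).summable, ?_⟩
    have : (fun a => ∑' b, F a b) = g := funext fun a => (hfib a).tsum_eq
    rw [this]; exact hg.summable
  have h1 : HasSum (fun p : α × β => F p.1 p.2) s := by
    have h := hf.hasSum
    have hgs : HasSum g (∑' p : α × β, F p.1 p.2) := h.prod_fiberwise hfib
    rwa [← hg.unique hgs] at h
  have h2 : HasSum (fun p : β × α => F p.2 p.1) s :=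
    ((Equiv.prodComm β α).hasSum_iff).mpr h1
  exact h2.prod_fiberwise fun b => (h2.summable.prod_factor b).hasSum

variable {Q : S → S → ℝ}

lemma kstep_nonneg (hQnn : ∀ x y, 0 ≤ Q x y) : ∀ t x y, 0 ≤ kstep Q t x y := by
  intro t
  induction t with
  | zero => intro x y; simp only [kstep]; split <;> norm_num
  | succ t ih =>
    intro x y
    exact tsum_nonneg fun c => mul_nonneg (ih x c) (hQnn c y)

lemma kstep_hasSum (hQnn : ∀ x y, 0 ≤ Q x y) (hQrow : ∀ x, HasSum (Q x) 1) : ∀ t x, HasSum (kstep Q t x) 1 := by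
  intro t
  induction t with
  | zero =>
    intro x
    have : kstep Q 0 x = fun y => if y = x then (1:ℝ) else 0 := by
      funext y; simp only [kstep]; by_cases h : x = y <;> simp [h, eq_comm]
    rw [this]; exact hasSum_ite_eq x 1
  | succ t ih =>
    intro x
    exact swap_hasSum (fun c y => mul_nonneg (kstep_nonneg hQnn t x c) (hQnn c y))
      (fun c => (hQrow c).mul_left _) (by simpa using ih x)

lemma kstep_le_one (hQnn : ∀ x y, 0 ≤ Q x y) (hQrow : ∀ x, HasSum (Q x) 1) : ∀ t x y, kstep Q t x y ≤ 1 :=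
  fun t x y => le_hasSum (kstep_hasSum hQnn hQrow t x) y
    (fun c _ => kstep_nonneg hQnn t x c)

lemma kstep_succ_left (hQnn : ∀ x y, 0 ≤ Q x y) (hQrow : ∀ x, HasSum (Q x) 1) : ∀ t x y, kstep Q (t + 1) x y = ∑' c, Q x c * kstep Q t c y := by
  intro t
  induction t with
  | zero =>
    intro x y
    have h1 : kstep Q 1 x y = Q x y := by
      simp only [kstep]
      rw [show (fun c => (if x = c then (1:ℝ) else 0) * Q c y)
          = fun c => if c = x then Q x y else 0 by
        funext c; by_cases h : x = c <;> simp [h, eq_comm]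
        ]
      exact tsum_ite_eq x (fun _ => Q x y)
    rw [h1]
    rw [show (fun c => Q x c * kstep Q 0 c y) = fun c => if c = y then Q x y else 0 by
      funext c; simp only [kstep]; by_cases h : c = y <;> simp [h]]
    exact (tsum_ite_eq y (fun _ => Q x y)).symm
  | succ t ih =>
    intro x y
    have hfib : ∀ d, HasSum (fun c => Q x d * kstep Q t d c * Q c y)
        (Q x d * kstep Q (t+1) d y) := by
      intro d
      have hs : Summable (fun c => kstep Q t d c * Q c y) :=
        Summable.of_nonneg_of_le
          (fun c => mul_nonneg (kstep_nonneg hQnn t d c) (hQnn c y))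
          (fun c => mul_le_of_le_one_right (kstep_nonneg hQnn t d c)
            (le_hasSum (hQrow c) y fun i _ => hQnn c i))
          (kstep_hasSum hQnn hQrow t d).summable
      have : HasSum (fun c => kstep Q t d c * Q c y) (kstep Q (t+1) d y) := by
        have := hs.hasSum
        simpa [kstep] using this
      simpa [mul_assoc] using this.mul_left (Q x d)
    have hg : HasSum (fun d => Q x d * kstep Q (t+1) d y)
        (∑' d, Q x d * kstep Q (t+1) d y) := by
      refine (Summable.of_nonneg_of_le
        (fun d => mul_nonneg (hQnn x d) (kstep_nonneg hQnn (t+1) d y))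
        (fun d => mul_le_of_le_one_right (hQnn x d)
          (kstep_le_one hQnn hQrow (t+1) d y))
        (hQrow x).summable).hasSum
    have hswap : HasSum (fun c => ∑' d, Q x d * kstep Q t d c * Q c y)
        (∑' d, Q x d * kstep Q (t+1) d y) :=
      swap_hasSum (fun d c => mul_nonneg (mul_nonneg (hQnn x d)
        (kstep_nonneg hQnn t d c)) (hQnn c y)) hfib hg
    have hentry : ∀ c, kstep Q (t+1) x c * Q c y = ∑' d, Q x d * kstep Q t d c * Q c y := by
      intro c
      rw [ih x c]
      have hs : Summable (fun d => Q x d * kstep Q t d c) :=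
        Summable.of_nonneg_of_le
          (fun d => mul_nonneg (hQnn x d) (kstep_nonneg hQnn t d c))
          (fun d => mul_le_of_le_one_right (hQnn x d) (kstep_le_one hQnn hQrow t d c))
          (hQrow x).summable
      exact (hs.tsum_mul_right (Q c y)).symm
    calc kstep Q (t+1+1) x y = ∑' c, kstep Q (t+1) x c * Q c y := by simp [kstep]
      _ = ∑' c, ∑' d, Q x d * kstep Q t d c * Q c y := by
          exact tsum_congr hentry
      _ = ∑' d, Q x d * kstep Q (t+1) d y := hswap.tsum_eq


lemma kstep_inv {ν₀ : S → ℝ} (hQnn : ∀ x y, 0 ≤ Q x y)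
    (hQrow : ∀ x, HasSum (Q x) 1) (hν₀nn : ∀ x, 0 ≤ ν₀ x)
    (hQinv : ∀ y, HasSum (fun x => ν₀ x * Q x y) (ν₀ y)) :
    ∀ t y, HasSum (fun x => ν₀ x * kstep Q t x y) (ν₀ y) := by
  intro t
  induction t with
  | zero =>
    intro y
    have h : (fun x => ν₀ x * kstep Q 0 x y) = fun x => if x = y then ν₀ y else 0 := by
      funext x; simp only [kstep]; by_cases h : x = y <;> simp [h]
    rw [h]; exact hasSum_ite_eq y (ν₀ y)
  | succ t ih =>
    intro y
    have hswap : HasSum (fun x => ∑' c, ν₀ x * Q x c * kstep Q t c y) (ν₀ y) :=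
      swap_hasSum (fun c x => mul_nonneg (mul_nonneg (hν₀nn x) (hQnn x c))
          (kstep_nonneg hQnn t c y))
        (fun c => (hQinv c).mul_right _) (ih y)
    have h : ∀ x, (∑' c, ν₀ x * Q x c * kstep Q t c y) = ν₀ x * kstep Q (t+1) x y := by
      intro x
      rw [kstep_succ_left hQnn hQrow, ← tsum_mul_left]
      exact tsum_congr fun c => by ring
    simpa [h] using hswap

end aux

section gsec

variable {S : Type*} [Countable S] {Q : S → S → ℝ} {z : ℝ}

/-- The generating function `∑_t z^t Q^t(x, O)` as a function of `x`. -/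
def gfun (Q : S → S → ℝ) (z : ℝ) (O : S) (x : S) : ℝ := ∑' t : ℕ, z ^ t * kstep Q t x O

lemma gfun_summable (hQnn : ∀ x y, 0 ≤ Q x y) (hQrow : ∀ x, HasSum (Q x) 1)
    (hz0 : 0 < z) (hz1 : z < 1) (O x : S) :
    Summable (fun t : ℕ => z ^ t * kstep Q t x O) :=
  Summable.of_nonneg_of_le
    (fun t => mul_nonneg (pow_nonneg hz0.le t) (kstep_nonneg hQnn t x O))
    (fun t => mul_le_of_le_one_right (pow_nonneg hz0.le t) (kstep_le_one hQnn hQrow t x O))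
    (summable_geometric_of_lt_one hz0.le hz1)

lemma gfun_nonneg (hQnn : ∀ x y, 0 ≤ Q x y) (hz0 : 0 < z) (O x : S) :
    0 ≤ gfun Q z O x :=
  tsum_nonneg fun t => mul_nonneg (pow_nonneg hz0.le t) (kstep_nonneg hQnn t x O)

lemma gfun_le (hQnn : ∀ x y, 0 ≤ Q x y) (hQrow : ∀ x, HasSum (Q x) 1)
    (hz0 : 0 < z) (hz1 : z < 1) (O x : S) :
    gfun Q z O x ≤ (1 - z)⁻¹ := by
  have h1 : gfun Q z O x ≤ ∑' t : ℕ, z ^ t :=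
    Summable.tsum_le_tsum
      (fun t => mul_le_of_le_one_right (pow_nonneg hz0.le t) (kstep_le_one hQnn hQrow t x O))
      (gfun_summable hQnn hQrow hz0 hz1 O x) (summable_geometric_of_lt_one hz0.le hz1)
  rwa [tsum_geometric_of_lt_one hz0.le hz1] at h1

lemma gfun_eq (hQnn : ∀ x y, 0 ≤ Q x y) (hQrow : ∀ x, HasSum (Q x) 1)
    (hz0 : 0 < z) (hz1 : z < 1) (O x : S) :
    gfun Q z O x = (if x = O then 1 else 0) + z * ∑' y, Q x y * gfun Q z O y := by
  have hgs : Summable (fun y => Q x y * gfun Q z O y) :=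
    Summable.of_nonneg_of_le
      (fun y => mul_nonneg (hQnn x y) (gfun_nonneg hQnn hz0 O y))
      (fun y => mul_le_mul_of_nonneg_left (gfun_le hQnn hQrow hz0 hz1 O y) (hQnn x y))
      ((hQrow x).summable.mul_right ((1 - z)⁻¹))
  have hswap : HasSum (fun t : ℕ => ∑' y, Q x y * (z ^ t * kstep Q t y O))
      (∑' y, Q x y * gfun Q z O y) :=
    swap_hasSum
      (fun y t => mul_nonneg (hQnn x y)
        (mul_nonneg (pow_nonneg hz0.le t) (kstep_nonneg hQnn t y O)))
      (fun y => ((gfun_summable hQnn hQrow hz0 hz1 O y).hasSum).mul_left (Q x y))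
      hgs.hasSum
  have hinner : ∀ t : ℕ, (∑' y, Q x y * (z ^ t * kstep Q t y O))
      = z ^ t * kstep Q (t+1) x O := by
    intro t
    rw [kstep_succ_left hQnn hQrow, ← tsum_mul_left]
    exact tsum_congr fun y => by ring
  have hA : HasSum (fun t : ℕ => z ^ t * kstep Q (t+1) x O)
      (∑' y, Q x y * gfun Q z O y) := by
    have h := hswap; simp only [hinner] at h; exact h
  have h0 : gfun Q z O x
      = z ^ 0 * kstep Q 0 x O + ∑' t : ℕ, z ^ (t+1) * kstep Q (t+1) x O :=
    Summable.tsum_eq_zero_add (gfun_summable hQnn hQrow hz0 hz1 O x)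
  have h1 : (∑' t : ℕ, z ^ (t+1) * kstep Q (t+1) x O)
      = z * ∑' y, Q x y * gfun Q z O y := by
    rw [← hA.tsum_eq, ← tsum_mul_left]
    exact tsum_congr fun t => by ring
  rw [h0, h1]
  simp only [kstep, pow_zero, one_mul]

lemma gfun_weight {ν₀ : S → ℝ} (hQnn : ∀ x y, 0 ≤ Q x y) (hQrow : ∀ x, HasSum (Q x) 1)
    (hν₀nn : ∀ x, 0 ≤ ν₀ x) (hQinv : ∀ y, HasSum (fun x => ν₀ x * Q x y) (ν₀ y))
    (hz0 : 0 < z) (hz1 : z < 1) (O : S) :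
    Summable (fun x => ν₀ x * gfun Q z O x) := by
  have hswap : HasSum (fun x => ∑' t : ℕ, z ^ t * (ν₀ x * kstep Q t x O))
      ((1 - z)⁻¹ * ν₀ O) :=
    swap_hasSum
      (fun t x => mul_nonneg (pow_nonneg hz0.le t)
        (mul_nonneg (hν₀nn x) (kstep_nonneg hQnn t x O)))
      (fun t => (kstep_inv hQnn hQrow hν₀nn hQinv t O).mul_left (z ^ t))
      ((hasSum_geometric_of_lt_one hz0.le hz1).mul_right (ν₀ O))
  have h : ∀ x, (∑' t : ℕ, z ^ t * (ν₀ x * kstep Q t x O)) = ν₀ x * gfun Q z O x := by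
    intro x
    rw [show gfun Q z O x = ∑' t : ℕ, z ^ t * kstep Q t x O from rfl, ← tsum_mul_left]
    exact tsum_congr fun t => by ring
  simp only [h] at hswap
  exact hswap.summable

end gsec

section forms

variable {S : Type*} [Countable S]

lemma pair_summable {ν₀ : S → ℝ} (hν₀nn : ∀ x, 0 ≤ ν₀ x)
    {B : S → S → ℝ} (hBnn : ∀ x y, 0 ≤ B x y) {r : ℝ} (hr : 0 ≤ r)
    (hBrow : ∀ x, HasSum (B x) r) {f₁ f₂ : S → ℝ}
    (h1 : ∀ x, 0 ≤ f₁ x) (h2 : ∀ x, 0 ≤ f₂ x) {C : ℝ} (h2b : ∀ x, f₂ x ≤ C)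
    (hm : Summable fun x => ν₀ x * f₁ x) :
    Summable (fun p : S × S => ν₀ p.1 * B p.1 p.2 * (f₁ p.1 * f₂ p.2)) := by
  have hnn : ∀ p : S × S, 0 ≤ ν₀ p.1 * B p.1 p.2 * (f₁ p.1 * f₂ p.2) :=
    fun p => mul_nonneg (mul_nonneg (hν₀nn p.1) (hBnn p.1 p.2))
      (mul_nonneg (h1 p.1) (h2 p.2))
  have hb : ∀ x y, ν₀ x * B x y * (f₁ x * f₂ y) ≤ ν₀ x * f₁ x * C * B x y := by
    intro x y
    have h := mul_le_mul_of_nonneg_left (h2b y)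
      (mul_nonneg (mul_nonneg (hν₀nn x) (hBnn x y)) (h1 x))
    calc ν₀ x * B x y * (f₁ x * f₂ y) = ν₀ x * B x y * f₁ x * f₂ y := by ring
      _ ≤ ν₀ x * B x y * f₁ x * C := h
      _ = ν₀ x * f₁ x * C * B x y := by ring
  have hfib : ∀ x, Summable (fun y => ν₀ x * B x y * (f₁ x * f₂ y)) := by
    intro x
    exact Summable.of_nonneg_of_le (fun y => hnn (x, y)) (fun y => hb x y)
      ((hBrow x).summable.mul_left _)
  rw [summable_prod_of_nonneg hnn]
  refine ⟨hfib, ?_⟩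
  have hbb : ∀ x, (∑' y, ν₀ x * B x y * (f₁ x * f₂ y)) ≤ ν₀ x * f₁ x * (C * r) := by
    intro x
    calc (∑' y, ν₀ x * B x y * (f₁ x * f₂ y)) ≤ ∑' y, ν₀ x * f₁ x * C * B x y :=
          Summable.tsum_le_tsum (hb x) (hfib x) ((hBrow x).summable.mul_left _)
      _ = ν₀ x * f₁ x * C * r := ((hBrow x).mul_left _).tsum_eq
      _ = ν₀ x * f₁ x * (C * r) := by ring
  exact Summable.of_nonneg_of_le (fun x => tsum_nonneg fun y => hnn (x, y)) hbb
    (hm.mul_right (C * r))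

lemma pair_iter {ν₀ : S → ℝ} {B : S → S → ℝ} {f g : S → ℝ}
    (hsum : Summable (fun p : S × S => ν₀ p.1 * B p.1 p.2 * (f p.1 * g p.2))) :
    ∑' p : S × S, ν₀ p.1 * B p.1 p.2 * (f p.1 * g p.2)
      = ∑' x, ν₀ x * f x * ∑' y, B x y * g y := by
  rw [Summable.tsum_prod' hsum (fun x => hsum.prod_factor x)]
  refine tsum_congr fun x => ?_
  calc (∑' y, ν₀ x * B x y * (f x * g y)) = ∑' y, ν₀ x * f x * (B x y * g y) :=
        tsum_congr fun y => by ring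
    _ = ν₀ x * f x * ∑' y, B x y * g y := tsum_mul_left

lemma pair_symm {ν₀ : S → ℝ} {B : S → S → ℝ}
    (hrev : ∀ x y, ν₀ x * B x y = ν₀ y * B y x) (f g : S → ℝ) :
    ∑' p : S × S, ν₀ p.1 * B p.1 p.2 * (f p.1 * g p.2)
      = ∑' p : S × S, ν₀ p.1 * B p.1 p.2 * (g p.1 * f p.2) := by
  rw [← (Equiv.prodComm S S).tsum_eq
    (fun p : S × S => ν₀ p.1 * B p.1 p.2 * (g p.1 * f p.2))]
  refine tsum_congr fun p => ?_
  show ν₀ p.1 * B p.1 p.2 * (f p.1 * g p.2) = ν₀ p.2 * B p.2 p.1 * (g p.2 * f p.1)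
  rw [show ν₀ p.2 * B p.2 p.1 * (g p.2 * f p.1)
      = ν₀ p.2 * B p.2 p.1 * (g p.2 * f p.1) from rfl, ← hrev p.1 p.2]
  ring

lemma dirichlet {ν₀ : S → ℝ} (hν₀nn : ∀ x, 0 ≤ ν₀ x)
    {B : S → S → ℝ} (hBnn : ∀ x y, 0 ≤ B x y) {r : ℝ} (hr : 0 ≤ r)
    (hBrow : ∀ x, HasSum (B x) r)
    (hBcol : ∀ y, HasSum (fun x => ν₀ x * B x y) (r * ν₀ y))
    {g : S → ℝ} (hg : Summable fun x => ν₀ x * (g x * g x)) :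
    ∑' p : S × S, ν₀ p.1 * B p.1 p.2 * (g p.1 * g p.2)
      ≤ r * ∑' x, ν₀ x * (g x * g x) := by
  set Sg := ∑' x, ν₀ x * (g x * g x) with hSg
  have hSnn : 0 ≤ Sg := tsum_nonneg fun x => mul_nonneg (hν₀nn x) (mul_self_nonneg _)
  -- the diagonal-in-first-variable family
  have hfib1 : ∀ x, HasSum (fun y => ν₀ x * B x y * (g x * g x))
      (ν₀ x * (g x * g x) * r) := by
    intro x
    have h := (hBrow x).mul_left (ν₀ x * (g x * g x))
    have e1 : (fun y => ν₀ x * (g x * g x) * B x y)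
        = fun y => ν₀ x * B x y * (g x * g x) := funext fun y => by ring
    rwa [e1] at h
  have hnn1 : ∀ p : S × S, 0 ≤ ν₀ p.1 * B p.1 p.2 * (g p.1 * g p.1) :=
    fun p => mul_nonneg (mul_nonneg (hν₀nn p.1) (hBnn p.1 p.2)) (mul_self_nonneg _)
  have sum1 : Summable (fun p : S × S => ν₀ p.1 * B p.1 p.2 * (g p.1 * g p.1)) := by
    rw [summable_prod_of_nonneg hnn1]
    refine ⟨fun x => (hfib1 x).summable, ?_⟩
    have e : (fun x => ∑' y, ν₀ x * B x y * (g x * g x))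
        = fun x => ν₀ x * (g x * g x) * r := funext fun x => (hfib1 x).tsum_eq
    rw [e]; exact hg.mul_right r
  have tsum1 : ∑' p : S × S, ν₀ p.1 * B p.1 p.2 * (g p.1 * g p.1) = Sg * r := by
    have h := sum1.hasSum.prod_fiberwise hfib1
    exact h.tsum_eq ▸ (h.unique (hg.hasSum.mul_right r))
  -- the diagonal-in-second-variable family
  have hfib2 : ∀ y, HasSum (fun x => ν₀ x * B x y * (g y * g y))
      (r * ν₀ y * (g y * g y)) := fun y => (hBcol y).mul_right _
  have hnn2' : ∀ q : S × S, 0 ≤ ν₀ q.2 * B q.2 q.1 * (g q.1 * g q.1) :=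
    fun q => mul_nonneg (mul_nonneg (hν₀nn q.2) (hBnn q.2 q.1)) (mul_self_nonneg _)
  have sum2' : Summable (fun q : S × S => ν₀ q.2 * B q.2 q.1 * (g q.1 * g q.1)) := by
    rw [summable_prod_of_nonneg hnn2']
    refine ⟨fun y => (hfib2 y).summable, ?_⟩
    have e : (fun y => ∑' x, ν₀ x * B x y * (g y * g y))
        = fun y => r * (ν₀ y * (g y * g y)) := funext fun y => by
      rw [(hfib2 y).tsum_eq]; ring
    rw [e]; exact hg.mul_left r
  have tsum2' : ∑' q : S × S, ν₀ q.2 * B q.2 q.1 * (g q.1 * g q.1) = r * Sg := by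
    have h := sum2'.hasSum.prod_fiberwise hfib2
    have h2 : HasSum (fun y => r * ν₀ y * (g y * g y)) (r * Sg) := by
      have := hg.hasSum.mul_left r
      have e : (fun y => r * (ν₀ y * (g y * g y)))
          = fun y => r * ν₀ y * (g y * g y) := funext fun y => by ring
      rwa [e] at this
    exact h.tsum_eq ▸ (h.unique h2)
  have sum2 : Summable (fun p : S × S => ν₀ p.1 * B p.1 p.2 * (g p.2 * g p.2)) := by
    have h := ((Equiv.prodComm S S).summable_iff
      (f := fun q : S × S => ν₀ q.2 * B q.2 q.1 * (g q.1 * g q.1))).mpr sum2'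
    exact h
  have tsum2 : ∑' p : S × S, ν₀ p.1 * B p.1 p.2 * (g p.2 * g p.2) = r * Sg := by
    rw [← tsum2']
    exact ((Equiv.prodComm S S).tsum_eq
      (fun q : S × S => ν₀ q.2 * B q.2 q.1 * (g q.1 * g q.1)))
  -- the dominating family
  set D : S × S → ℝ := fun p => (ν₀ p.1 * B p.1 p.2 * (g p.1 * g p.1)
      + ν₀ p.1 * B p.1 p.2 * (g p.2 * g p.2)) / 2 with hD
  have sumD : Summable D := (sum1.add sum2).div_const 2
  have tsumD : ∑' p, D p = r * Sg := by
    rw [hD]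
    simp only [div_eq_mul_inv]
    rw [tsum_mul_right, Summable.tsum_add sum1 sum2, tsum1, tsum2]
    ring
  have habs : ∀ p : S × S, |ν₀ p.1 * B p.1 p.2 * (g p.1 * g p.2)| ≤ D p := by
    intro p
    have hBν : 0 ≤ ν₀ p.1 * B p.1 p.2 := mul_nonneg (hν₀nn p.1) (hBnn p.1 p.2)
    have h2 : |g p.1 * g p.2| ≤ (g p.1 * g p.1 + g p.2 * g p.2) / 2 := by
      rw [abs_mul]
      nlinarith [sq_nonneg (|g p.1| - |g p.2|), sq_abs (g p.1), sq_abs (g p.2),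
        abs_nonneg (g p.1), abs_nonneg (g p.2)]
    calc |ν₀ p.1 * B p.1 p.2 * (g p.1 * g p.2)|
        = (ν₀ p.1 * B p.1 p.2) * |g p.1 * g p.2| := by
          rw [abs_mul, abs_of_nonneg hBν]
      _ ≤ (ν₀ p.1 * B p.1 p.2) * ((g p.1 * g p.1 + g p.2 * g p.2) / 2) :=
          mul_le_mul_of_nonneg_left h2 hBν
      _ = D p := by rw [hD]; ring
  have sumM : Summable (fun p : S × S => ν₀ p.1 * B p.1 p.2 * (g p.1 * g p.2)) :=
    summable_abs_iff.mp
      (Summable.of_nonneg_of_le (fun p => abs_nonneg _) habs sumD)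
  calc ∑' p : S × S, ν₀ p.1 * B p.1 p.2 * (g p.1 * g p.2)
      ≤ ∑' p, D p := Summable.tsum_le_tsum (fun p => (le_abs_self _).trans (habs p)) sumM sumD
    _ = r * Sg := tsumD

end forms

section keysec

variable {S : Type*} [Countable S]

lemma eqn_identity {ν₀ : S → ℝ} (hν₀nn : ∀ x, 0 ≤ ν₀ x)
    {Q : S → S → ℝ} (hQnn : ∀ x y, 0 ≤ Q x y) (hQrow : ∀ x, HasSum (Q x) 1)
    {z : ℝ} (hz0 : 0 < z) (hz1 : z < 1) (O : S) {f : S → ℝ}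
    (hfnn : ∀ x, 0 ≤ f x) (hfle : ∀ x, f x ≤ (1 - z)⁻¹)
    (hmf : Summable fun x => ν₀ x * f x) :
    ∑' x, ν₀ x * (f x * gfun Q z O x)
      = ν₀ O * f O
        + z * ∑' p : S × S, ν₀ p.1 * Q p.1 p.2 * (f p.1 * gfun Q z O p.2) := by
  have hunn : ∀ x, 0 ≤ gfun Q z O x := gfun_nonneg hQnn hz0 O
  have hule : ∀ x, gfun Q z O x ≤ (1 - z)⁻¹ := gfun_le hQnn hQrow hz0 hz1 O
  have hQusum : ∀ x, Summable (fun y => Q x y * gfun Q z O y) := fun x =>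
    Summable.of_nonneg_of_le (fun y => mul_nonneg (hQnn x y) (hunn y))
      (fun y => mul_le_mul_of_nonneg_left (hule y) (hQnn x y))
      ((hQrow x).summable.mul_right _)
  have hQunn : ∀ x, 0 ≤ ∑' y, Q x y * gfun Q z O y := fun x =>
    tsum_nonneg fun y => mul_nonneg (hQnn x y) (hunn y)
  have hQule : ∀ x, (∑' y, Q x y * gfun Q z O y) ≤ (1 - z)⁻¹ := by
    intro x
    calc (∑' y, Q x y * gfun Q z O y) ≤ ∑' y, Q x y * (1 - z)⁻¹ :=
          Summable.tsum_le_tsum (fun y => mul_le_mul_of_nonneg_left (hule y) (hQnn x y))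
            (hQusum x) ((hQrow x).summable.mul_right _)
      _ = 1 * (1 - z)⁻¹ := ((hQrow x).mul_right _).tsum_eq
      _ = (1 - z)⁻¹ := one_mul _
  have hpair : Summable
      (fun p : S × S => ν₀ p.1 * Q p.1 p.2 * (f p.1 * gfun Q z O p.2)) :=
    pair_summable hν₀nn hQnn zero_le_one hQrow hfnn hunn hule hmf
  have hiter_sum : Summable (fun x => ν₀ x * f x * ∑' y, Q x y * gfun Q z O y) :=
    Summable.of_nonneg_of_le
      (fun x => mul_nonneg (mul_nonneg (hν₀nn x) (hfnn x)) (hQunn x))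
      (fun x => mul_le_mul_of_nonneg_left (hQule x) (mul_nonneg (hν₀nn x) (hfnn x)))
      (hmf.mul_right _)
  have hpoint : ∀ x, ν₀ x * (f x * gfun Q z O x)
      = (if x = O then ν₀ O * f O else 0)
        + z * (ν₀ x * f x * ∑' y, Q x y * gfun Q z O y) := by
    intro x
    rw [gfun_eq hQnn hQrow hz0 hz1 O x]
    by_cases hx : x = O
    · subst hx; simp only [if_pos rfl]; ring_nf; simp; ring
    · simp only [if_neg hx]; ring
  calc ∑' x, ν₀ x * (f x * gfun Q z O x)
      = ∑' x, ((if x = O then ν₀ O * f O else 0)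
          + z * (ν₀ x * f x * ∑' y, Q x y * gfun Q z O y)) := tsum_congr hpoint
    _ = (∑' x, (if x = O then ν₀ O * f O else 0))
          + ∑' x, z * (ν₀ x * f x * ∑' y, Q x y * gfun Q z O y) :=
        Summable.tsum_add (hasSum_ite_eq O (ν₀ O * f O)).summable (hiter_sum.mul_left z)
    _ = ν₀ O * f O + z * ∑' x, ν₀ x * f x * ∑' y, Q x y * gfun Q z O y := by
        rw [tsum_ite_eq, tsum_mul_left]
    _ = ν₀ O * f O
        + z * ∑' p : S × S, ν₀ p.1 * Q p.1 p.2 * (f p.1 * gfun Q z O p.2) := by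
        rw [pair_iter hpair]

lemma key (ν₀ : S → ℝ) (hν₀ : ∀ x, 0 < ν₀ x)
    (P K : S → S → ℝ)
    (hPnn : ∀ x y, 0 ≤ P x y) (hProw : ∀ x, HasSum (P x) 1)
    (hKnn : ∀ x y, 0 ≤ K x y) (hKrow : ∀ x, HasSum (K x) 1)
    (hPinv : ∀ y, HasSum (fun x => ν₀ x * P x y) (ν₀ y))
    (hKrev : ∀ x y, ν₀ x * K x y = ν₀ y * K y x)
    (ε : ℝ) (hε0 : 0 < ε) (hε1 : ε < 1)
    (hdom : ∀ x y, ε * K x y ≤ P x y) (O : S)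
    {z : ℝ} (hz0 : 0 < z) (hz1 : z < 1) :
    ∑' t : ℕ, z ^ t * kstep P t O O ≤ ε⁻¹ * ∑' t : ℕ, z ^ t * kstep K t O O := by
  have hν₀nn : ∀ x, 0 ≤ ν₀ x := fun x => (hν₀ x).le
  have hKinv : ∀ y, HasSum (fun x => ν₀ x * K x y) (ν₀ y) := by
    intro y
    have h := (hKrow y).mul_left (ν₀ y)
    rw [mul_one] at h
    have e : (fun x => ν₀ y * K y x) = fun x => ν₀ x * K x y :=
      funext fun x => (hKrev x y).symm
    rwa [e] at h
  have hvnn : ∀ x, 0 ≤ gfun P z O x := gfun_nonneg hPnn hz0 O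
  have hwnn : ∀ x, 0 ≤ gfun K z O x := gfun_nonneg hKnn hz0 O
  have hvle : ∀ x, gfun P z O x ≤ (1 - z)⁻¹ := gfun_le hPnn hProw hz0 hz1 O
  have hwle : ∀ x, gfun K z O x ≤ (1 - z)⁻¹ := gfun_le hKnn hKrow hz0 hz1 O
  have hmv : Summable (fun x => ν₀ x * gfun P z O x) :=
    gfun_weight hPnn hProw hν₀nn hPinv hz0 hz1 O
  have hmw : Summable (fun x => ν₀ x * gfun K z O x) :=
    gfun_weight hKnn hKrow hν₀nn hKinv hz0 hz1 O
  have bnd : ∀ (f g : S → ℝ), (∀ x, 0 ≤ f x) → (∀ x, 0 ≤ g x)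
      → (∀ x, g x ≤ (1 - z)⁻¹) → Summable (fun x => ν₀ x * f x)
      → Summable (fun x => ν₀ x * (f x * g x)) := by
    intro f g hf hg hgC hm
    refine Summable.of_nonneg_of_le
      (fun x => mul_nonneg (hν₀nn x) (mul_nonneg (hf x) (hg x)))
      (fun x => ?_) (hm.mul_right ((1 - z)⁻¹))
    calc ν₀ x * (f x * g x) = ν₀ x * f x * g x := by ring
      _ ≤ ν₀ x * f x * (1 - z)⁻¹ :=
        mul_le_mul_of_nonneg_left (hgC x) (mul_nonneg (hν₀nn x) (hf x))
  have Svv := bnd _ _ hvnn hvnn hvle hmv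
  have Svw := bnd (gfun P z O) (gfun K z O) hvnn hwnn hwle hmv
  have Sww := bnd _ _ hwnn hwnn hwle hmw
  -- the kernel A = P - εK
  have hAnn : ∀ x y, 0 ≤ P x y - ε * K x y := fun x y => sub_nonneg.2 (hdom x y)
  have hArow : ∀ x, HasSum (fun y => P x y - ε * K x y) (1 - ε) := by
    intro x
    have h := (hProw x).sub ((hKrow x).mul_left ε)
    rwa [mul_one] at h
  have hAcol : ∀ y, HasSum (fun x => ν₀ x * (P x y - ε * K x y)) ((1 - ε) * ν₀ y) := by
    intro y
    have h := (hPinv y).sub ((hKinv y).mul_left ε)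
    have e : (fun x => ν₀ x * P x y - ε * (ν₀ x * K x y))
        = fun x => ν₀ x * (P x y - ε * K x y) := funext fun x => by ring
    have e2 : ν₀ y - ε * ν₀ y = (1 - ε) * ν₀ y := by ring
    rwa [e, e2] at h
  have hKcol1 : ∀ y, HasSum (fun x => ν₀ x * K x y) (1 * ν₀ y) := by
    intro y; rw [one_mul]; exact hKinv y
  -- pair summabilities
  have sKvv := pair_summable hν₀nn hKnn zero_le_one hKrow hvnn hvnn hvle hmv
  have sKvw := pair_summable hν₀nn hKnn zero_le_one hKrow hvnn hwnn hwle hmv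
  have sKwv := pair_summable hν₀nn hKnn zero_le_one hKrow hwnn hvnn hvle hmw
  have sKww := pair_summable hν₀nn hKnn zero_le_one hKrow hwnn hwnn hwle hmw
  have sAvv := pair_summable hν₀nn hAnn (by linarith : (0:ℝ) ≤ 1 - ε) hArow
    hvnn hvnn hvle hmv
  -- the basic identities
  have I1 := eqn_identity hν₀nn hPnn hProw hz0 hz1 O hvnn hvle hmv
  have I3 := eqn_identity hν₀nn hKnn hKrow hz0 hz1 O hvnn hvle hmv
  have I2 := eqn_identity hν₀nn hKnn hKrow hz0 hz1 O hwnn hwle hmw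
  -- split of the P-form
  have E2 : ∑' p : S × S, ν₀ p.1 * P p.1 p.2 * (gfun P z O p.1 * gfun P z O p.2)
      = (∑' p : S × S, ν₀ p.1 * (P p.1 p.2 - ε * K p.1 p.2)
            * (gfun P z O p.1 * gfun P z O p.2))
        + ε * ∑' p : S × S, ν₀ p.1 * K p.1 p.2 * (gfun P z O p.1 * gfun P z O p.2) := by
    calc ∑' p : S × S, ν₀ p.1 * P p.1 p.2 * (gfun P z O p.1 * gfun P z O p.2)
        = ∑' p : S × S, (ν₀ p.1 * (P p.1 p.2 - ε * K p.1 p.2)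
              * (gfun P z O p.1 * gfun P z O p.2)
            + ε * (ν₀ p.1 * K p.1 p.2 * (gfun P z O p.1 * gfun P z O p.2))) :=
          tsum_congr fun p => by ring
      _ = _ := by rw [Summable.tsum_add sAvv (sKvv.mul_left ε), tsum_mul_left]
  -- Dirichlet bounds
  have E3 := dirichlet hν₀nn hAnn (by linarith : (0:ℝ) ≤ 1 - ε) hArow hAcol Svv
  have Sgg : Summable (fun x => ν₀ x
      * ((ε * gfun P z O x - gfun K z O x) * (ε * gfun P z O x - gfun K z O x))) :=
    (((Svv.mul_left (ε * ε)).sub (Svw.mul_left (2 * ε))).add Sww).congr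
      (fun x => by ring)
  have E8 := dirichlet hν₀nn hKnn zero_le_one hKrow hKcol1 Sgg
  -- expansions
  have E6 : ∑' x, ν₀ x
        * ((ε * gfun P z O x - gfun K z O x) * (ε * gfun P z O x - gfun K z O x))
      = ε * ε * ∑' x, ν₀ x * (gfun P z O x * gfun P z O x)
        - 2 * ε * ∑' x, ν₀ x * (gfun P z O x * gfun K z O x)
        + ∑' x, ν₀ x * (gfun K z O x * gfun K z O x) := by
    calc ∑' x, ν₀ x
          * ((ε * gfun P z O x - gfun K z O x) * (ε * gfun P z O x - gfun K z O x))
        = ∑' x, ((ε * ε * (ν₀ x * (gfun P z O x * gfun P z O x))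
            - 2 * ε * (ν₀ x * (gfun P z O x * gfun K z O x)))
            + ν₀ x * (gfun K z O x * gfun K z O x)) := tsum_congr fun x => by ring
      _ = _ := by
          rw [Summable.tsum_add ((Svv.mul_left (ε * ε)).sub (Svw.mul_left (2 * ε))) Sww,
            Summable.tsum_sub (Svv.mul_left (ε * ε)) (Svw.mul_left (2 * ε)),
            tsum_mul_left, tsum_mul_left]
  have E7 : ∑' p : S × S, ν₀ p.1 * K p.1 p.2
        * ((ε * gfun P z O p.1 - gfun K z O p.1) * (ε * gfun P z O p.2 - gfun K z O p.2))
      = ε * ε * ∑' p : S × S, ν₀ p.1 * K p.1 p.2 * (gfun P z O p.1 * gfun P z O p.2)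
        - ε * ∑' p : S × S, ν₀ p.1 * K p.1 p.2 * (gfun P z O p.1 * gfun K z O p.2)
        - ε * ∑' p : S × S, ν₀ p.1 * K p.1 p.2 * (gfun K z O p.1 * gfun P z O p.2)
        + ∑' p : S × S, ν₀ p.1 * K p.1 p.2 * (gfun K z O p.1 * gfun K z O p.2) := by
    calc ∑' p : S × S, ν₀ p.1 * K p.1 p.2
          * ((ε * gfun P z O p.1 - gfun K z O p.1)
            * (ε * gfun P z O p.2 - gfun K z O p.2))
        = ∑' p : S × S, (((ε * ε
              * (ν₀ p.1 * K p.1 p.2 * (gfun P z O p.1 * gfun P z O p.2))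
            - ε * (ν₀ p.1 * K p.1 p.2 * (gfun P z O p.1 * gfun K z O p.2)))
            - ε * (ν₀ p.1 * K p.1 p.2 * (gfun K z O p.1 * gfun P z O p.2)))
            + ν₀ p.1 * K p.1 p.2 * (gfun K z O p.1 * gfun K z O p.2)) :=
          tsum_congr fun p => by ring
      _ = _ := by
          rw [Summable.tsum_add (((sKvv.mul_left (ε * ε)).sub (sKvw.mul_left ε)).sub
              (sKwv.mul_left ε)) sKww,
            Summable.tsum_sub ((sKvv.mul_left (ε * ε)).sub (sKvw.mul_left ε)) (sKwv.mul_left ε),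
            Summable.tsum_sub (sKvv.mul_left (ε * ε)) (sKvw.mul_left ε),
            tsum_mul_left, tsum_mul_left, tsum_mul_left]
  have hsymm : ∑' p : S × S, ν₀ p.1 * K p.1 p.2 * (gfun K z O p.1 * gfun P z O p.2)
      = ∑' p : S × S, ν₀ p.1 * K p.1 p.2 * (gfun P z O p.1 * gfun K z O p.2) :=
    pair_symm hKrev (gfun K z O) (gfun P z O)
  have E9 : 0 ≤ ∑' x, ν₀ x
      * ((ε * gfun P z O x - gfun K z O x) * (ε * gfun P z O x - gfun K z O x)) :=
    tsum_nonneg fun x => mul_nonneg (hν₀nn x) (mul_self_nonneg _)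
  have E10 : 0 ≤ ∑' x, ν₀ x * (gfun P z O x * gfun P z O x) :=
    tsum_nonneg fun x => mul_nonneg (hν₀nn x) (mul_nonneg (hvnn x) (hvnn x))
  -- F1 : z * pairKgg ≤ ipgg
  have F1 : z * ∑' p : S × S, ν₀ p.1 * K p.1 p.2
        * ((ε * gfun P z O p.1 - gfun K z O p.1) * (ε * gfun P z O p.2 - gfun K z O p.2))
      ≤ ∑' x, ν₀ x
        * ((ε * gfun P z O x - gfun K z O x) * (ε * gfun P z O x - gfun K z O x)) := by
    rcases le_or_gt 0 (∑' p : S × S, ν₀ p.1 * K p.1 p.2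
        * ((ε * gfun P z O p.1 - gfun K z O p.1)
          * (ε * gfun P z O p.2 - gfun K z O p.2))) with h | h
    · calc z * _ ≤ 1 * _ := mul_le_mul_of_nonneg_right hz1.le h
        _ ≤ _ := by rw [one_mul] at E8 ⊢; exact E8
    · have h1 : z * ∑' p : S × S, ν₀ p.1 * K p.1 p.2
          * ((ε * gfun P z O p.1 - gfun K z O p.1)
            * (ε * gfun P z O p.2 - gfun K z O p.2)) ≤ 0 :=
        mul_nonpos_of_nonneg_of_nonpos hz0.le h.le
      linarith
  -- step 1 : ε (ipvv - z pairKvv) ≤ ν₀ O v O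
  have h3z : z * ∑' p : S × S, ν₀ p.1 * (P p.1 p.2 - ε * K p.1 p.2)
        * (gfun P z O p.1 * gfun P z O p.2)
      ≤ z * ((1 - ε) * ∑' x, ν₀ x * (gfun P z O x * gfun P z O x)) :=
    mul_le_mul_of_nonneg_left E3 hz0.le
  have G2 : z * ∑' p : S × S, ν₀ p.1 * P p.1 p.2 * (gfun P z O p.1 * gfun P z O p.2)
      = z * ∑' p : S × S, ν₀ p.1 * (P p.1 p.2 - ε * K p.1 p.2)
          * (gfun P z O p.1 * gfun P z O p.2)
        + ε * (z * ∑' p : S × S, ν₀ p.1 * K p.1 p.2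
          * (gfun P z O p.1 * gfun P z O p.2)) := by rw [E2]; ring
  have hzero : 0 ≤ (1 - ε) * (1 - z) * ∑' x, ν₀ x * (gfun P z O x * gfun P z O x) :=
    mul_nonneg (mul_nonneg (by linarith) (by linarith)) E10
  have step1 : ε * ((∑' x, ν₀ x * (gfun P z O x * gfun P z O x))
        - z * ∑' p : S × S, ν₀ p.1 * K p.1 p.2 * (gfun P z O p.1 * gfun P z O p.2))
      ≤ ν₀ O * gfun P z O O := by nlinarith [I1, G2, h3z, hzero]
  have step2 := mul_le_mul_of_nonneg_left step1 hε0.le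
  have G7 : z * ∑' p : S × S, ν₀ p.1 * K p.1 p.2
        * ((ε * gfun P z O p.1 - gfun K z O p.1) * (ε * gfun P z O p.2 - gfun K z O p.2))
      = ε * ε * (z * ∑' p : S × S, ν₀ p.1 * K p.1 p.2
            * (gfun P z O p.1 * gfun P z O p.2))
        - ε * (z * ∑' p : S × S, ν₀ p.1 * K p.1 p.2
            * (gfun P z O p.1 * gfun K z O p.2))
        - ε * (z * ∑' p : S × S, ν₀ p.1 * K p.1 p.2
            * (gfun K z O p.1 * gfun P z O p.2))
        + z * ∑' p : S × S, ν₀ p.1 * K p.1 p.2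
            * (gfun K z O p.1 * gfun K z O p.2) := by rw [E7]; ring
  have G4 : ε * ∑' x, ν₀ x * (gfun P z O x * gfun K z O x)
      = ε * (ν₀ O * gfun P z O O)
        + ε * (z * ∑' p : S × S, ν₀ p.1 * K p.1 p.2
          * (gfun P z O p.1 * gfun K z O p.2)) := by rw [I3]; ring
  have hsymmz : ε * (z * ∑' p : S × S, ν₀ p.1 * K p.1 p.2
        * (gfun K z O p.1 * gfun P z O p.2))
      = ε * (z * ∑' p : S × S, ν₀ p.1 * K p.1 p.2
        * (gfun P z O p.1 * gfun K z O p.2)) := by rw [hsymm]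
  have final : ε * (ν₀ O * gfun P z O O) ≤ ν₀ O * gfun K z O O := by
    nlinarith [F1, E6, G7, I2, G4, step2, hsymmz]
  have hO := hν₀ O
  rw [show ε * (ν₀ O * gfun P z O O) = ν₀ O * (ε * gfun P z O O) by ring] at final
  have h2 : ε * gfun P z O O ≤ gfun K z O O := (mul_le_mul_iff_right₀ hO).mp final
  have h3 : gfun P z O O ≤ ε⁻¹ * gfun K z O O := by
    calc gfun P z O O = ε⁻¹ * (ε * gfun P z O O) := by field_simp
      _ ≤ ε⁻¹ * gfun K z O O :=
        mul_le_mul_of_nonneg_left h2 (inv_nonneg.mpr hε0.le)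
  exact h3

end keysec

/-- Green function of the kernel `Q` at `O`, with values in `[0,∞]`. -/
def green {S : Type*} (Q : S → S → ℝ) (O : S) : ℝ≥0∞ :=
  ∑' t : ℕ, ENNReal.ofReal (kstep Q t O O)

/-- comparison of Green functions of a Markov chain with an
ε-dominated reversible chain sharing the invariant measure ν₀. -/
theorem stmt_12 {S : Type*} [Countable S]
    (ν₀ : S → ℝ) (hν₀ : ∀ x, 0 < ν₀ x)
    (P K : S → S → ℝ)
    (hPnn : ∀ x y, 0 ≤ P x y) (hProw : ∀ x, HasSum (P x) 1)
    (hKnn : ∀ x y, 0 ≤ K x y) (hKrow : ∀ x, HasSum (K x) 1)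
    (hPinv : ∀ y, HasSum (fun x => ν₀ x * P x y) (ν₀ y))
    (hKrev : ∀ x y, ν₀ x * K x y = ν₀ y * K y x)
    (ε : ℝ) (hε : ε ∈ Set.Ioo (0:ℝ) 1)
    (hdom : ∀ x y, ε * K x y ≤ P x y) (O : S) :
    (∀ z ∈ Set.Ioo (0:ℝ) 1,
      ∑' t : ℕ, z ^ t * kstep P t O O ≤ ε⁻¹ * ∑' t : ℕ, z ^ t * kstep K t O O) ∧
    green P O ≤ ENNReal.ofReal ε⁻¹ * green K O := by
  obtain ⟨hε0, hε1⟩ := hε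
  have part1 : ∀ z ∈ Set.Ioo (0:ℝ) 1,
      ∑' t : ℕ, z ^ t * kstep P t O O ≤ ε⁻¹ * ∑' t : ℕ, z ^ t * kstep K t O O :=
    fun z hz => key ν₀ hν₀ P K hPnn hProw hKnn hKrow hPinv hKrev ε hε0 hε1 hdom O
      hz.1 hz.2
  refine ⟨part1, ?_⟩
  by_cases hfin : green K O = ⊤
  · rw [hfin, ENNReal.mul_top (by
      simpa using (ENNReal.ofReal_pos.2 (inv_pos.2 hε0)).ne')]
    exact le_top
  · have hknn : ∀ t, 0 ≤ kstep K t O O := fun t => kstep_nonneg hKnn t O O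
    have hpnn : ∀ t, 0 ≤ kstep P t O O := fun t => kstep_nonneg hPnn t O O
    have hsumK : Summable (fun t : ℕ => kstep K t O O) := by
      have h := ENNReal.summable_toReal (f := fun t : ℕ => ENNReal.ofReal (kstep K t O O))
        (by exact hfin)
      exact h.congr fun t => ENNReal.toReal_ofReal (hknn t)
    have hCK : green K O = ENNReal.ofReal (∑' t : ℕ, kstep K t O O) :=
      (ENNReal.ofReal_tsum_of_nonneg hknn hsumK).symm
    have hzb : ∀ z ∈ Set.Ioo (0:ℝ) 1,
        ∑' t : ℕ, z ^ t * kstep P t O O ≤ ε⁻¹ * ∑' t : ℕ, kstep K t O O := by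
      intro z hz
      refine (part1 z hz).trans ?_
      have h1 : ∑' t : ℕ, z ^ t * kstep K t O O ≤ ∑' t : ℕ, kstep K t O O :=
        Summable.tsum_le_tsum
          (fun t => mul_le_of_le_one_left (hknn t) (pow_le_one₀ hz.1.le hz.2.le))
          (gfun_summable hKnn hKrow hz.1 hz.2 O O) hsumK
      exact mul_le_mul_of_nonneg_left h1 (inv_nonneg.2 hε0.le)
    have hfs : ∀ n : ℕ, ∑ t ∈ Finset.range n, kstep P t O O
        ≤ ε⁻¹ * ∑' t : ℕ, kstep K t O O := by
      intro n
      have hcont : Continuous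
          (fun u : ℝ => ∑ t ∈ Finset.range n, u ^ t * kstep P t O O) := by
        apply continuous_finset_sum
        intro t _
        exact (continuous_pow t).mul continuous_const
      have htend : Filter.Tendsto
          (fun u : ℝ => ∑ t ∈ Finset.range n, u ^ t * kstep P t O O)
          (nhdsWithin 1 (Set.Iio 1)) (nhds (∑ t ∈ Finset.range n, kstep P t O O)) := by
        have h := (hcont.tendsto 1).mono_left (nhdsWithin_le_nhds (s := Set.Iio (1:ℝ)))
        simpa using h
      refine le_of_tendsto htend ?_
      filter_upwards [Ioo_mem_nhdsLT_of_mem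
        (show (1:ℝ) ∈ Set.Ioc 0 1 from ⟨one_pos, le_refl 1⟩)] with u hu
      calc ∑ t ∈ Finset.range n, u ^ t * kstep P t O O
          ≤ ∑' t : ℕ, u ^ t * kstep P t O O :=
            Summable.sum_le_tsum _ (fun t _ => mul_nonneg (pow_nonneg hu.1.le t) (hpnn t))
              (gfun_summable hPnn hProw hu.1 hu.2 O O)
        _ ≤ ε⁻¹ * ∑' t : ℕ, kstep K t O O := hzb u hu
    have hgreen : green P O ≤ ENNReal.ofReal (ε⁻¹ * ∑' t : ℕ, kstep K t O O) := by
      rw [green, ENNReal.tsum_eq_iSup_sum]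
      refine iSup_le fun s => ?_
      obtain ⟨n, hn⟩ := s.exists_nat_subset_range
      calc ∑ t ∈ s, ENNReal.ofReal (kstep P t O O)
          ≤ ∑ t ∈ Finset.range n, ENNReal.ofReal (kstep P t O O) :=
            Finset.sum_le_sum_of_subset hn
        _ = ENNReal.ofReal (∑ t ∈ Finset.range n, kstep P t O O) :=
            (ENNReal.ofReal_sum_of_nonneg (fun i _ => hpnn i)).symm
        _ ≤ ENNReal.ofReal (ε⁻¹ * ∑' t : ℕ, kstep K t O O) :=
            ENNReal.ofReal_le_ofReal (hfs n)
    calc green P O ≤ ENNReal.ofReal (ε⁻¹ * ∑' t : ℕ, kstep K t O O) := hgreen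
      _ = ENNReal.ofReal ε⁻¹ * ENNReal.ofReal (∑' t : ℕ, kstep K t O O) :=
          ENNReal.ofReal_mul (inv_nonneg.2 hε0.le)
      _ = ENNReal.ofReal ε⁻¹ * green K O := by rw [hCK]

end
end

section
/- Let 𝒫 be a Markov transition kernel on a countable set S, O ∈ S, and l ≥ 1 an integer. Let 𝒫̄ := ((I+𝒫)/2)^{l+1}. Then the Green functions satisfy G_𝒫(O,O) ≤ 2^{l−1}·(l+1)·G_{𝒫̄}(O,O). In particular, for the lazy kernel (I+𝒫)/2 one has G_{(I+𝒫)/2}(O,O) = 2·G_𝒫(O,O). -/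
open scoped Classical ENNReal

noncomputable section

/-- lazy version of a kernel. -/
def lazy {S : Type*} (Q : S → S → ℝ) : S → S → ℝ :=
  fun x y => ((if x = y then (1:ℝ) else 0) + Q x y) / 2

set_option linter.unusedSectionVars false

section AuxEK

variable {S : Type*}

/-- ENNReal-valued iterated kernel (auxiliary). -/
def ek (q : S → S → ℝ≥0∞) : ℕ → S → S → ℝ≥0∞
  | 0 => fun x y => if x = y then 1 else 0
  | (t + 1) => fun x y => ∑' z, ek q t x z * q z y

lemma ek_row (q : S → S → ℝ≥0∞) (hq : ∀ z, ∑' y, q z y = 1) :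
    ∀ (t : ℕ) (x : S), ∑' y, ek q t x y = 1 := by
  intro t
  induction t with
  | zero => intro x; simp only [ek]; rw [tsum_eq_single x] <;> simp +contextual [eq_comm]
  | succ t ih =>
    intro x
    simp only [ek]
    rw [ENNReal.tsum_comm]
    calc ∑' z, ∑' y, ek q t x z * q z y
        = ∑' z, ek q t x z * ∑' y, q z y := by
          exact tsum_congr fun z => ENNReal.tsum_mul_left
      _ = ∑' z, ek q t x z := by simp [hq]
      _ = 1 := ih x

lemma hasSum_one_of_ofReal {f : S → ℝ} (hf : ∀ a, 0 ≤ f a)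
    (h : ∑' a, ENNReal.ofReal (f a) = 1) : HasSum f 1 := by
  have hs : Summable f := by
    have := ENNReal.summable_toReal (f := fun a => ENNReal.ofReal (f a)) (by simp [h])
    simpa [ENNReal.toReal_ofReal, hf] using this
  have hv : ∑' a, f a = 1 := by
    have := ENNReal.tsum_toReal_eq (f := fun a => ENNReal.ofReal (f a))
      (fun a => ENNReal.ofReal_ne_top)
    rw [h] at this
    simpa [ENNReal.toReal_ofReal, hf] using this.symm
  exact hv ▸ hs.hasSum

lemma ek_add (q : S → S → ℝ≥0∞) (a : ℕ) :
    ∀ (b : ℕ) (x y : S), ek q (a + b) x y = ∑' z, ek q a x z * ek q b z y := by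
  intro b
  induction b with
  | zero =>
    intro x y
    simp only [Nat.add_zero]
    rw [tsum_eq_single y]
    · simp [ek]
    · intro z hz; simp [ek, hz]
  | succ b ih =>
    intro x y
    show ek q ((a + b) + 1) x y = _
    calc ek q ((a+b)+1) x y = ∑' w, ek q (a+b) x w * q w y := rfl
      _ = ∑' w, (∑' z, ek q a x z * ek q b z w) * q w y := by
          exact tsum_congr fun w => by rw [ih x w]
      _ = ∑' w, ∑' z, ek q a x z * (ek q b z w * q w y) := by
          refine tsum_congr fun w => ?_
          rw [← ENNReal.tsum_mul_right]
          exact tsum_congr fun z => by ring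
      _ = ∑' z, ∑' w, ek q a x z * (ek q b z w * q w y) := ENNReal.tsum_comm
      _ = ∑' z, ek q a x z * ∑' w, ek q b z w * q w y := by
          exact tsum_congr fun z => ENNReal.tsum_mul_left
      _ = ∑' z, ek q a x z * ek q (b+1) z y := rfl

lemma ek_iter (q : S → S → ℝ≥0∞) (m : ℕ) :
    ∀ (t : ℕ) (x y : S), ek (fun a b => ek q m a b) t x y = ek q (m * t) x y := by
  intro t
  induction t with
  | zero => intro x y; simp [ek]
  | succ t ih =>
    intro x y
    calc ek (fun a b => ek q m a b) (t+1) x y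
        = ∑' z, ek (fun a b => ek q m a b) t x z * ek q m z y := rfl
      _ = ∑' z, ek q (m*t) x z * ek q m z y := tsum_congr fun z => by rw [ih]
      _ = ek q (m*t + m) x y := (ek_add q (m*t) m x y).symm
      _ = ek q (m * (t+1)) x y := by ring_nf

lemma ql_eq (P : S → S → ℝ) (hnn : ∀ x y, 0 ≤ P x y) (a b : S) :
    ENNReal.ofReal (lazy P a b) =
      2⁻¹ * (ek (fun u v => ENNReal.ofReal (P u v)) 0 a b + ENNReal.ofReal (P a b)) := by
  have h0 : (0:ℝ) ≤ (if a = b then (1:ℝ) else 0) := by positivity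
  rw [lazy, div_eq_mul_inv, ENNReal.ofReal_mul (add_nonneg h0 (hnn a b)),
    ENNReal.ofReal_add h0 (hnn a b)]
  rw [mul_comm]
  congr 1
  · simp [ENNReal.ofReal_inv_of_pos]
  · congr 1
    by_cases h : a = b <;> simp [ek, h]

lemma pascal_sum (f : ℕ → ℝ≥0∞) (s : ℕ) :
    ∑ k ∈ Finset.range (s+2), ((s+1).choose k : ℝ≥0∞) * f k =
      (∑ k ∈ Finset.range (s+1), (s.choose k : ℝ≥0∞) * f k)
      + ∑ k ∈ Finset.range (s+1), (s.choose k : ℝ≥0∞) * f (k+1) := by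
  rw [Finset.sum_range_succ' (fun k => (((s+1).choose k : ℝ≥0∞)) * f k) (s+1)]
  simp only [Nat.choose_succ_succ, Nat.cast_add, add_mul, Nat.choose_zero_right, Nat.cast_one,
    one_mul]
  rw [Finset.sum_add_distrib]
  have h1 : ∑ k ∈ Finset.range (s+1), ((s.choose (k+1) : ℝ≥0∞)) * f (k+1)
      = ∑ k ∈ Finset.range s, ((s.choose (k+1) : ℝ≥0∞)) * f (k+1) := by
    rw [Finset.sum_range_succ]
    simp [Nat.choose_succ_self]
  have h2 : ∑ k ∈ Finset.range (s+1), ((s.choose k : ℝ≥0∞)) * f k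
      = (∑ k ∈ Finset.range s, ((s.choose (k+1) : ℝ≥0∞)) * f (k+1)) + f 0 := by
    rw [Finset.sum_range_succ' (fun k => ((s.choose k : ℝ≥0∞)) * f k) s]
    simp
  rw [h1, h2]
  abel

lemma ek_lazy_eq (P : S → S → ℝ) (hnn : ∀ x y, 0 ≤ P x y) :
    ∀ (s : ℕ) (x y : S),
      ek (fun a b => ENNReal.ofReal (lazy P a b)) s x y =
        2⁻¹ ^ s * ∑ k ∈ Finset.range (s+1),
          (s.choose k : ℝ≥0∞) * ek (fun a b => ENNReal.ofReal (P a b)) k x y := by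
  set qp : S → S → ℝ≥0∞ := fun a b => ENNReal.ofReal (P a b) with hqp
  set ql : S → S → ℝ≥0∞ := fun a b => ENNReal.ofReal (lazy P a b) with hql
  intro s
  induction s with
  | zero => intro x y; simp [ek]
  | succ s ih =>
    intro x y
    have hB : ∑' z, ek ql s x z * qp z y
        = 2⁻¹ ^ s * ∑ k ∈ Finset.range (s+1), (s.choose k : ℝ≥0∞) * ek qp (k+1) x y := by
      calc ∑' z, ek ql s x z * qp z y
          = ∑' z, 2⁻¹ ^ s * ((∑ k ∈ Finset.range (s+1), (s.choose k : ℝ≥0∞) * ek qp k x z) * qp z y) := by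
            refine tsum_congr fun z => ?_
            rw [ih x z, mul_assoc]
        _ = 2⁻¹ ^ s * ∑' z, (∑ k ∈ Finset.range (s+1), (s.choose k : ℝ≥0∞) * ek qp k x z) * qp z y :=
            ENNReal.tsum_mul_left
        _ = 2⁻¹ ^ s * ∑' z, ∑ k ∈ Finset.range (s+1), (s.choose k : ℝ≥0∞) * (ek qp k x z * qp z y) := by
            congr 1
            refine tsum_congr fun z => ?_
            rw [Finset.sum_mul]
            exact Finset.sum_congr rfl fun k _ => by ring
        _ = 2⁻¹ ^ s * ∑ k ∈ Finset.range (s+1), ∑' z, (s.choose k : ℝ≥0∞) * (ek qp k x z * qp z y) := by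
            rw [Summable.tsum_finsetSum (fun k _ => ENNReal.summable)]
        _ = 2⁻¹ ^ s * ∑ k ∈ Finset.range (s+1), (s.choose k : ℝ≥0∞) * ek qp (k+1) x y := by
            congr 1
            refine Finset.sum_congr rfl fun k _ => ?_
            rw [ENNReal.tsum_mul_left]
            rfl
    have hA : ∑' z, ek ql s x z * ek qp 0 z y = ek ql s x y := by
      rw [tsum_eq_single y]
      · simp [ek]
      · intro z hz; simp [ek, hz]
    calc ek ql (s+1) x y = ∑' z, ek ql s x z * ql z y := rfl
      _ = ∑' z, 2⁻¹ * (ek ql s x z * ek qp 0 z y + ek ql s x z * qp z y) := by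
          refine tsum_congr fun z => ?_
          rw [hql]
          show ek ql s x z * ENNReal.ofReal (lazy P z y) = _
          rw [ql_eq P hnn z y]
          ring
      _ = 2⁻¹ * ((∑' z, ek ql s x z * ek qp 0 z y) + ∑' z, ek ql s x z * qp z y) := by
          rw [ENNReal.tsum_mul_left, Summable.tsum_add ENNReal.summable ENNReal.summable]
      _ = 2⁻¹ * (ek ql s x y + 2⁻¹ ^ s * ∑ k ∈ Finset.range (s+1), (s.choose k : ℝ≥0∞) * ek qp (k+1) x y) := by
          rw [hA, hB]
      _ = 2⁻¹ ^ (s+1) * ((∑ k ∈ Finset.range (s+1), (s.choose k : ℝ≥0∞) * ek qp k x y)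
            + ∑ k ∈ Finset.range (s+1), (s.choose k : ℝ≥0∞) * ek qp (k+1) x y) := by
          rw [ih x y]
          ring
      _ = 2⁻¹ ^ (s+1) * ∑ k ∈ Finset.range (s+2), ((s+1).choose k : ℝ≥0∞) * ek qp k x y := by
          rw [pascal_sum]

lemma A_eq (k : ℕ) : ∑' s : ℕ, (s.choose k : ℝ≥0∞) * 2⁻¹ ^ s = 2 := by
  have hr : HasSum (fun s : ℕ => (s.choose k : ℝ) * (2⁻¹:ℝ) ^ s) 2 := by
    have h1 : HasSum (fun n : ℕ => (((n+k).choose k : ℝ)) * (2⁻¹:ℝ)^n) ((2:ℝ)^(k+1)) := by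
      have h := hasSum_choose_mul_geometric_of_norm_lt_one (𝕜 := ℝ) k (r := 2⁻¹) (by norm_num)
      rw [show (1:ℝ) - 2⁻¹ = 2⁻¹ by norm_num, one_div, ← inv_pow, inv_inv] at h
      exact h
    have hv : (2⁻¹:ℝ)^k * 2^(k+1) = 2 := by
      rw [pow_succ, ← mul_assoc, ← mul_pow]
      norm_num
    have h2 : HasSum (fun n : ℕ => (((n+k).choose k : ℝ)) * (2⁻¹:ℝ)^(n+k)) 2 := by
      have h := h1.mul_left ((2⁻¹:ℝ)^k)
      rw [hv] at h
      have he : (fun n : ℕ => (((n+k).choose k : ℝ)) * (2⁻¹:ℝ)^(n+k))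
          = fun n => (2⁻¹:ℝ)^k * ((((n+k).choose k : ℝ)) * (2⁻¹:ℝ)^n) := by
        funext n; rw [pow_add]; ring
      rw [he]
      exact h
    have h3 := (hasSum_nat_add_iff (f := fun s : ℕ => (s.choose k : ℝ) * (2⁻¹:ℝ) ^ s) k).mp h2
    have hz : ∑ i ∈ Finset.range k, (i.choose k : ℝ) * (2⁻¹:ℝ) ^ i = 0 := by
      refine Finset.sum_eq_zero fun i hi => ?_
      rw [Nat.choose_eq_zero_of_lt (Finset.mem_range.mp hi)]
      simp
    rwa [hz, add_zero] at h3
  calc ∑' s : ℕ, (s.choose k : ℝ≥0∞) * 2⁻¹ ^ s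
      = ∑' s : ℕ, ENNReal.ofReal ((s.choose k : ℝ) * (2⁻¹:ℝ) ^ s) := by
        refine tsum_congr fun s => ?_
        rw [ENNReal.ofReal_mul (by positivity), ENNReal.ofReal_natCast,
          ENNReal.ofReal_pow (by norm_num), ENNReal.ofReal_inv_of_pos (by norm_num)]
        norm_num
    _ = ENNReal.ofReal 2 := by
        rw [← ENNReal.ofReal_tsum_of_nonneg (fun s => by positivity) hr.summable, hr.tsum_eq]
    _ = 2 := by norm_num

lemma c_step (P : S → S → ℝ) (hnn : ∀ x y, 0 ≤ P x y) (O : S) (s : ℕ) :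
    ek (fun a b => ENNReal.ofReal (lazy P a b)) s O O
      ≤ 2 * ek (fun a b => ENNReal.ofReal (lazy P a b)) (s+1) O O := by
  set ql : S → S → ℝ≥0∞ := fun a b => ENNReal.ofReal (lazy P a b) with hql
  have h2 : (2⁻¹ : ℝ≥0∞) ≤ ql O O := by
    rw [hql]
    show (2⁻¹ : ℝ≥0∞) ≤ ENNReal.ofReal (lazy P O O)
    rw [ql_eq P hnn O O]
    have : ek (fun u v => ENNReal.ofReal (P u v)) 0 O O = 1 := by simp [ek]
    rw [this]
    calc (2⁻¹:ℝ≥0∞) = 2⁻¹ * 1 := (mul_one _).symm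
      _ ≤ 2⁻¹ * (1 + ENNReal.ofReal (P O O)) := mul_le_mul_right le_self_add _
  have h1 : ek ql s O O * 2⁻¹ ≤ ek ql (s+1) O O := by
    calc ek ql s O O * 2⁻¹ ≤ ek ql s O O * ql O O := mul_le_mul_right h2 _
      _ ≤ ∑' z, ek ql s O z * ql z O := ENNReal.le_tsum O
      _ = ek ql (s+1) O O := rfl
  calc ek ql s O O = ek ql s O O * 2⁻¹ * 2 := by
        rw [mul_assoc, ENNReal.inv_mul_cancel two_ne_zero ENNReal.ofNat_ne_top, mul_one]
    _ ≤ ek ql (s+1) O O * 2 := mul_le_mul_left h1 _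
    _ = 2 * ek ql (s+1) O O := mul_comm _ _

lemma c_pow (P : S → S → ℝ) (hnn : ∀ x y, 0 ≤ P x y) (O : S) (n : ℕ) :
    ∀ j : ℕ, ek (fun a b => ENNReal.ofReal (lazy P a b)) n O O
      ≤ 2 ^ j * ek (fun a b => ENNReal.ofReal (lazy P a b)) (n+j) O O := by
  intro j
  induction j with
  | zero => simp
  | succ j ih =>
    calc ek (fun a b => ENNReal.ofReal (lazy P a b)) n O O
        ≤ 2 ^ j * ek (fun a b => ENNReal.ofReal (lazy P a b)) (n+j) O O := ih
      _ ≤ 2 ^ j * (2 * ek (fun a b => ENNReal.ofReal (lazy P a b)) (n+j+1) O O) :=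
          mul_le_mul_right (c_step P hnn O (n+j)) _
      _ = 2 ^ (j+1) * ek (fun a b => ENNReal.ofReal (lazy P a b)) (n+(j+1)) O O := by
          rw [← mul_assoc, ← pow_succ]
          rfl

lemma green_lazy_tsum (P : S → S → ℝ) (hnn : ∀ x y, 0 ≤ P x y) (O : S) :
    ∑' s : ℕ, ek (fun a b => ENNReal.ofReal (lazy P a b)) s O O
      = 2 * ∑' k : ℕ, ek (fun a b => ENNReal.ofReal (P a b)) k O O := by
  set qp : S → S → ℝ≥0∞ := fun a b => ENNReal.ofReal (P a b) with hqp
  calc ∑' s : ℕ, ek (fun a b => ENNReal.ofReal (lazy P a b)) s O O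
      = ∑' s : ℕ, ∑' k : ℕ, 2⁻¹ ^ s * ((s.choose k : ℝ≥0∞) * ek qp k O O) := by
        refine tsum_congr fun s => ?_
        rw [ek_lazy_eq P hnn s O O, ENNReal.tsum_mul_left]
        congr 1
        refine (tsum_eq_sum ?_).symm
        intro k hk
        rw [Nat.choose_eq_zero_of_lt (by simpa using hk)]
        simp
    _ = ∑' k : ℕ, ∑' s : ℕ, 2⁻¹ ^ s * ((s.choose k : ℝ≥0∞) * ek qp k O O) := ENNReal.tsum_comm
    _ = ∑' k : ℕ, 2 * ek qp k O O := by
        refine tsum_congr fun k => ?_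
        calc ∑' s : ℕ, 2⁻¹ ^ s * ((s.choose k : ℝ≥0∞) * ek qp k O O)
            = (∑' s : ℕ, (s.choose k : ℝ≥0∞) * 2⁻¹ ^ s) * ek qp k O O := by
              rw [← ENNReal.tsum_mul_right]
              exact tsum_congr fun s => by ring
          _ = 2 * ek qp k O O := by rw [A_eq k]
    _ = 2 * ∑' k : ℕ, ek qp k O O := ENNReal.tsum_mul_left

end AuxEK

section Bridge

variable {S : Type*} [Countable S]

lemma kstep_bridge (Q : S → S → ℝ) (hnn : ∀ x y, 0 ≤ Q x y) (hrow : ∀ x, HasSum (Q x) 1) :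
    ∀ (t : ℕ) (x : S),
      (∀ y, 0 ≤ kstep Q t x y) ∧ HasSum (kstep Q t x) 1 ∧
        (∀ y, ENNReal.ofReal (kstep Q t x y) =
          ek (fun a b => ENNReal.ofReal (Q a b)) t x y) := by
  have hQ1 : ∀ z y, Q z y ≤ 1 := fun z y =>
    le_hasSum (hrow z) y (fun _ _ => hnn z _)
  have hq1 : ∀ z, ∑' y, ENNReal.ofReal (Q z y) = 1 := by
    intro z
    rw [← ENNReal.ofReal_tsum_of_nonneg (hnn z) (hrow z).summable, (hrow z).tsum_eq,
      ENNReal.ofReal_one]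
  intro t
  induction t with
  | zero =>
    intro x
    refine ⟨fun y => by by_cases h : x = y <;> simp [kstep, h], ?_, ?_⟩
    · have : (fun y => kstep Q 0 x y) = fun y => if y = x then (1:ℝ) else 0 := by
        funext y; by_cases h : x = y <;> simp [kstep, h, eq_comm]
      simpa [this] using hasSum_ite_eq x (1:ℝ)
    · intro y; by_cases h : x = y <;> simp [kstep, ek, h]
  | succ t ih =>
    intro x
    obtain ⟨hknn, hks, hkof⟩ := ih x
    have hsumm : ∀ y, Summable (fun z => kstep Q t x z * Q z y) := by
      intro y
      refine Summable.of_nonneg_of_le (fun z => mul_nonneg (hknn z) (hnn z y))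
        (fun z => ?_) hks.summable
      exact mul_le_of_le_one_right (hknn z) (hQ1 z y)
    have hnn' : ∀ y, 0 ≤ kstep Q (t+1) x y := by
      intro y
      exact tsum_nonneg fun z => mul_nonneg (hknn z) (hnn z y)
    have hof : ∀ y, ENNReal.ofReal (kstep Q (t+1) x y) =
        ek (fun a b => ENNReal.ofReal (Q a b)) (t+1) x y := by
      intro y
      show ENNReal.ofReal (∑' z, kstep Q t x z * Q z y) = _
      rw [ENNReal.ofReal_tsum_of_nonneg (fun z => mul_nonneg (hknn z) (hnn z y)) (hsumm y)]
      refine tsum_congr fun z => ?_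
      rw [ENNReal.ofReal_mul (hknn z), hkof z]
    refine ⟨hnn', ?_, hof⟩
    apply hasSum_one_of_ofReal hnn'
    calc ∑' y, ENNReal.ofReal (kstep Q (t+1) x y)
        = ∑' y, ek (fun a b => ENNReal.ofReal (Q a b)) (t+1) x y := tsum_congr hof
      _ = 1 := ek_row _ hq1 (t+1) x

end Bridge

/-- the Green function of `𝒫` is controlled by that of
`𝒫̄ = ((I+𝒫)/2)^{l+1}`, and lazification doubles the Green function. -/
theorem stmt_13 {S : Type*} [Countable S]
    (P : S → S → ℝ) (hnn : ∀ x y, 0 ≤ P x y) (hrow : ∀ x, HasSum (P x) 1)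
    (O : S) (l : ℕ) (hl : 1 ≤ l) :
    green P O ≤ ((2 ^ (l - 1) * (l + 1) : ℕ) : ℝ≥0∞) * green (kstep (lazy P) (l + 1)) O ∧
    green (lazy P) O = 2 * green P O := by
  have hlnn : ∀ x y, 0 ≤ lazy P x y := by
    intro x y
    have h0 : (0:ℝ) ≤ (if x = y then (1:ℝ) else 0) := by positivity
    have := add_nonneg h0 (hnn x y)
    unfold lazy
    positivity
  have hlrow : ∀ x, HasSum (lazy P x) 1 := by
    intro x
    have hi : HasSum (fun y => if x = y then (1:ℝ) else 0) 1 := by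
      have h := hasSum_ite_eq x (1:ℝ)
      have he : (fun y => if x = y then (1:ℝ) else 0) = fun y => if y = x then (1:ℝ) else 0 := by
        funext y; by_cases h : x = y <;> simp [h, eq_comm]
      rw [he]; exact h
    have := (hi.add (hrow x)).div_const 2
    have he : (fun y => ((if x = y then (1:ℝ) else 0) + P x y) / 2) = lazy P x := rfl
    rw [he] at this
    norm_num at this
    exact this
  have bp := kstep_bridge P hnn hrow
  have bl := kstep_bridge (lazy P) hlnn hlrow
  set c : ℕ → ℝ≥0∞ := fun s => ek (fun a b => ENNReal.ofReal (lazy P a b)) s O O with hcdef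
  have gP : green P O = ∑' k : ℕ, ek (fun a b => ENNReal.ofReal (P a b)) k O O :=
    tsum_congr fun k => (bp k O).2.2 O
  have gL : green (lazy P) O = ∑' s : ℕ, c s := tsum_congr fun s => (bl s O).2.2 O
  have part2 : green (lazy P) O = 2 * green P O := by
    rw [gP, gL, hcdef, green_lazy_tsum P hnn O]
  refine ⟨?_, part2⟩
  -- Part 1
  have hQ'nn : ∀ x y, 0 ≤ kstep (lazy P) (l+1) x y := fun x y => (bl (l+1) x).1 y
  have hQ'row : ∀ x, HasSum (kstep (lazy P) (l+1) x) 1 := fun x => (bl (l+1) x).2.1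
  have bq := kstep_bridge _ hQ'nn hQ'row
  have hq'eq : (fun a b => ENNReal.ofReal (kstep (lazy P) (l+1) a b))
      = fun a b => ek (fun u v => ENNReal.ofReal (lazy P u v)) (l+1) a b :=
    funext fun a => funext fun b => (bl (l+1) a).2.2 b
  have gG : green (kstep (lazy P) (l+1)) O = ∑' t : ℕ, c ((l+1) * t) := by
    calc green (kstep (lazy P) (l+1)) O
        = ∑' t : ℕ, ek (fun a b => ENNReal.ofReal (kstep (lazy P) (l+1) a b)) t O O :=
          tsum_congr fun t => (bq t O).2.2 O
      _ = ∑' t : ℕ, ek (fun a b => ek (fun u v => ENNReal.ofReal (lazy P u v)) (l+1) a b) t O O := by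
          rw [hq'eq]
      _ = ∑' t : ℕ, c ((l+1) * t) := tsum_congr fun t => ek_iter _ (l+1) t O O
  have hsplit : ∑' s : ℕ, c s = ∑' t : ℕ, ∑ r : Fin (l+1), c (t * (l+1) + r.val) := by
    have e := Equiv.tsum_eq (Nat.divModEquiv (l+1)).symm c
    simp only [Nat.divModEquiv_symm_apply] at e
    rw [← e, ENNReal.tsum_prod']
    refine tsum_congr fun t => ?_
    rw [tsum_fintype]
  have hblock : ∀ t : ℕ, ∑ r : Fin (l+1), c (t * (l+1) + r.val)
      ≤ c (t * (l+1)) + ((l * 2^l : ℕ) : ℝ≥0∞) * c ((t+1) * (l+1)) := by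
    intro t
    rw [Fin.sum_univ_succ]
    refine add_le_add (le_of_eq (by norm_num)) ?_
    have hterm : ∀ i : Fin l, c (t * (l+1) + (Fin.succ i).val)
        ≤ (2^l : ℝ≥0∞) * c ((t+1) * (l+1)) := by
      intro i
      have hiv : (Fin.succ i).val = i.val + 1 := rfl
      have hidx : t*(l+1) + (i.val+1) + (l - i.val) = (t+1) * (l+1) := by
        have hi := i.isLt
        have h2 : (t+1)*(l+1) = t*(l+1) + (l+1) := by ring
        omega
      calc c (t * (l+1) + (Fin.succ i).val)
          ≤ 2^(l - i.val) * c (t*(l+1) + (i.val+1) + (l - i.val)) := by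
            rw [hiv]; exact c_pow P hnn O _ _
        _ = 2^(l - i.val) * c ((t+1) * (l+1)) := by rw [hidx]
        _ ≤ (2^l : ℝ≥0∞) * c ((t+1) * (l+1)) :=
            mul_le_mul_left (pow_le_pow_right₀ one_le_two (Nat.sub_le l i.val)) _
    calc ∑ i : Fin l, c (t * (l+1) + (Fin.succ i).val)
        ≤ ∑ _i : Fin l, (2^l : ℝ≥0∞) * c ((t+1) * (l+1)) :=
          Finset.sum_le_sum fun i _ => hterm i
      _ = ((l * 2^l : ℕ) : ℝ≥0∞) * c ((t+1) * (l+1)) := by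
          rw [Finset.sum_const, Finset.card_univ, Fintype.card_fin, nsmul_eq_mul]
          push_cast
          ring
  have hshift : ∑' t : ℕ, c ((t+1) * (l+1)) ≤ ∑' t : ℕ, c (t * (l+1)) :=
    ENNReal.summable.tsum_le_tsum_of_inj (fun t => t+1) (fun a b h => by simpa using h)
      (fun _ _ => zero_le) (fun t => le_rfl) ENNReal.summable
  have key : 2 * green P O ≤ ((2^l * (l+1) : ℕ) : ℝ≥0∞) * green (kstep (lazy P) (l+1)) O := by
    rw [← part2, gL]
    calc ∑' s : ℕ, c s
        = ∑' t : ℕ, ∑ r : Fin (l+1), c (t * (l+1) + r.val) := hsplit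
      _ ≤ ∑' t : ℕ, (c (t * (l+1)) + ((l * 2^l : ℕ) : ℝ≥0∞) * c ((t+1) * (l+1))) :=
          Summable.tsum_le_tsum hblock ENNReal.summable ENNReal.summable
      _ = (∑' t : ℕ, c (t * (l+1))) + ((l * 2^l : ℕ) : ℝ≥0∞) * ∑' t : ℕ, c ((t+1) * (l+1)) := by
          rw [Summable.tsum_add ENNReal.summable ENNReal.summable, ENNReal.tsum_mul_left]
      _ ≤ (∑' t : ℕ, c (t * (l+1))) + ((l * 2^l : ℕ) : ℝ≥0∞) * ∑' t : ℕ, c (t * (l+1)) := by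
          gcongr
      _ = ((1 + l * 2^l : ℕ) : ℝ≥0∞) * ∑' t : ℕ, c (t * (l+1)) := by
          push_cast
          ring
      _ ≤ ((2^l * (l+1) : ℕ) : ℝ≥0∞) * ∑' t : ℕ, c (t * (l+1)) := by
          gcongr
          have h1 : (1:ℕ) ≤ 2^l := Nat.one_le_two_pow
          have h2 : 1 + l * 2^l ≤ 2^l * (l+1) := by
            calc 1 + l * 2^l ≤ 2^l + l * 2^l := Nat.add_le_add_right h1 _
              _ = 2^l * (l+1) := by ring
          exact_mod_cast Nat.cast_le.mpr h2
      _ = ((2^l * (l+1) : ℕ) : ℝ≥0∞) * green (kstep (lazy P) (l+1)) O := by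
          rw [gG]
          congr 1
          exact tsum_congr fun t => by rw [mul_comm]
  have hfac : ((2^l * (l+1) : ℕ) : ℝ≥0∞) = 2 * ((2 ^ (l - 1) * (l + 1) : ℕ) : ℝ≥0∞) := by
    have : (2:ℕ)^l = 2 * 2^(l-1) := by
      conv_lhs => rw [show l = (l-1)+1 by omega]
      rw [pow_succ]
      ring
    rw [this]
    push_cast
    ring
  rw [hfac, mul_assoc] at key
  exact (ENNReal.mul_le_mul_iff_right two_ne_zero ENNReal.ofNat_ne_top).mp key

end
end
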